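/- For every infinite cardinal κ there exists a linear order X of cardinality 2^κ with the following two properties. (a) For all linear orders A, B, C, D, each of cardinality at most κ, every order isomorphism f from the lexicographic sum A + X + B to the lexicographic sum C + X + D maps the copy of A onto the copy of C, the copy of X onto the copy of X, and the copy of B onto the copy of D. (b) For every nonempty proper initial segment I of X there is an initial segment J of X properly containing I such that J is order-isomorphic to I. -/

import Mathlib

universe u

open Cardinal

namespace DistLemmaAux

/-! ### An injective map `ℤ → ℤ` with positive values -/

def posEmb (n : ℤ) : ℤ := if 0 ≤ n then 2 * n + 1 else -2 * n

lemma posEmb_pos (n : ℤ) : 0 < posEmb n := by unfold posEmb; split <;> omega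

lemma posEmb_injective : Function.Injective posEmb := by
  intro a b h
  unfold posEmb at h
  split_ifs at h <;> omega


lemma lex_sum_cases {α β : Type*} (p : Lex (α ⊕ β)) :
    (∃ a, p = toLex (Sum.inl a)) ∨ ∃ b, p = toLex (Sum.inr b) := by
  rcases h : ofLex p with a | b
  · exact Or.inl ⟨a, by rw [← h]; exact (toLex_ofLex p).symm⟩
  · exact Or.inr ⟨b, by rw [← h]; exact (toLex_ofLex p).symm⟩

/-! ### The order `X := Lex (ι → ℤ)` -/

section PiLex

variable {ι : Type u} [LinearOrder ι] [WellFoundedLT ι]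

lemma pi_lex_lt {a b : ι → ℤ} :
    toLex a < toLex b ↔ ∃ i, (∀ j, j < i → a j = b j) ∧ a i < b i :=
  Iff.rfl

lemma add_lt_add_lex (c : ι → ℤ) {a b : ι → ℤ} (h : toLex a < toLex b) :
    toLex (a + c) < toLex (b + c) := by
  obtain ⟨i, hj, hi⟩ := pi_lex_lt.1 h
  exact pi_lex_lt.2 ⟨i, fun j hji => by simp [hj j hji], by simpa using hi⟩

/-- Translation by `c` as an order isomorphism of `Lex (ι → ℤ)`. -/
noncomputable def addIso (c : ι → ℤ) : Lex (ι → ℤ) ≃o Lex (ι → ℤ) :=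
  StrictMono.orderIsoOfSurjective (fun y => toLex (ofLex y + c))
    (fun _ _ hab => add_lt_add_lex c hab)
    (fun y => ⟨toLex (ofLex y - c), by simp⟩)

lemma addIso_apply (c : ι → ℤ) (y : Lex (ι → ℤ)) : addIso c y = toLex (ofLex y + c) := by
  rfl

lemma exists_iso_map (u w : Lex (ι → ℤ)) :
    ∃ φ : Lex (ι → ℤ) ≃o Lex (ι → ℤ), φ u = w := by
  refine ⟨addIso (ofLex w - ofLex u), ?_⟩
  rw [addIso_apply]
  have h : ofLex u + (ofLex w - ofLex u) = ofLex w := by abel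
  rw [h, toLex_ofLex]

variable [Nonempty ι]

lemma le_card_below (x : Lex (ι → ℤ)) :
    #(ι → ℤ) ≤ #{y : Lex (ι → ℤ) // y < x} := by
  have wf : WellFounded ((· < ·) : ι → ι → Prop) := IsWellFounded.wf
  set i₀ := wf.min Set.univ Set.univ_nonempty with hi₀
  have hmin : ∀ j : ι, ¬j < i₀ := fun j hj => wf.not_lt_min _ (Set.mem_univ j) hj
  have hlt : ∀ s : ι → ℤ, toLex (fun i => ofLex x i - posEmb (s i)) < x := by
    intro s
    refine pi_lex_lt.2 ⟨i₀, fun j hj => absurd hj (hmin j), ?_⟩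
    have := posEmb_pos (s i₀)
    simp only [Pi.ofLex_apply]
    omega
  refine Cardinal.mk_le_of_injective
    (f := fun s => (⟨toLex (fun i => ofLex x i - posEmb (s i)), hlt s⟩ :
      {y : Lex (ι → ℤ) // y < x})) ?_
  intro s t hst
  have h2 : (fun i => ofLex x i - posEmb (s i)) = fun i => ofLex x i - posEmb (t i) :=
    toLex.injective (congrArg Subtype.val hst)
  funext i
  have h3 := congrFun h2 i
  exact posEmb_injective (by omega)

lemma le_card_above (x : Lex (ι → ℤ)) :
    #(ι → ℤ) ≤ #{y : Lex (ι → ℤ) // x < y} := by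
  have wf : WellFounded ((· < ·) : ι → ι → Prop) := IsWellFounded.wf
  set i₀ := wf.min Set.univ Set.univ_nonempty with hi₀
  have hmin : ∀ j : ι, ¬j < i₀ := fun j hj => wf.not_lt_min _ (Set.mem_univ j) hj
  have hlt : ∀ s : ι → ℤ, x < toLex (fun i => ofLex x i + posEmb (s i)) := by
    intro s
    refine pi_lex_lt.2 ⟨i₀, fun j hj => absurd hj (hmin j), ?_⟩
    have := posEmb_pos (s i₀)
    simp only [Pi.ofLex_apply]
    omega
  refine Cardinal.mk_le_of_injective
    (f := fun s => (⟨toLex (fun i => ofLex x i + posEmb (s i)), hlt s⟩ :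
      {y : Lex (ι → ℤ) // x < y})) ?_
  intro s t hst
  have h2 : (fun i => ofLex x i + posEmb (s i)) = fun i => ofLex x i + posEmb (t i) :=
    toLex.injective (congrArg Subtype.val hst)
  funext i
  have h3 := congrFun h2 i
  exact posEmb_injective (by omega)

end PiLex

/-! ### Order isomorphism onto the image of a set -/

noncomputable def imgIso {α β : Type*} [Preorder α] [Preorder β] (e : α ≃o β) (s : Set α) :
    ↥s ≃o ↥(e '' s) where
  toFun x := ⟨e x, ⟨x.1, x.2, rfl⟩⟩
  invFun y := ⟨e.symm y.1, by
    obtain ⟨x, hx, hxy⟩ := y.2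
    rw [← hxy, e.symm_apply_apply]; exact hx⟩
  left_inv x := Subtype.ext (e.symm_apply_apply x)
  right_inv y := Subtype.ext (e.apply_symm_apply y.1)
  map_rel_iff' := by
    intro a b
    exact Subtype.mk_le_mk.trans e.le_iff_le

/-! ### The rigidity argument for lexicographic sums -/

section Sums

variable {A B C D X : Type u} [LinearOrder A] [LinearOrder B] [LinearOrder C]
  [LinearOrder D] [LinearOrder X]

lemma step1 {κ : Cardinal.{u}}
    (hbelow : ∀ x : X, κ < #{y : X // y < x}) (habove : ∀ x : X, κ < #{y : X // x < y})
    (hC : #C ≤ κ) (hD : #D ≤ κ)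
    (f : ((A ⊕ₗ X) ⊕ₗ B) ≃o ((C ⊕ₗ X) ⊕ₗ D)) (x : X) :
    ∃ x', f (toLex (Sum.inl (toLex (Sum.inr x)))) = toLex (Sum.inl (toLex (Sum.inr x'))) := by
  obtain ⟨v, hv⟩ : ∃ v, f (toLex (Sum.inl (toLex (Sum.inr x)))) = toLex v := ⟨_, rfl⟩
  rcases v with p | d
  · rcases lex_sum_cases p with ⟨c, rfl⟩ | ⟨x', rfl⟩
    · -- `f` sends `x` into the copy of `C`: impossible, too many elements below `x`.
      exfalso
      have key : ∀ y : {y : X // y ≤ x}, ∃ c' : C,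
          f (toLex (Sum.inl (toLex (Sum.inr y.1)))) = toLex (Sum.inl (toLex (Sum.inl c'))) := by
        rintro ⟨y, hy⟩
        have h1 : f (toLex (Sum.inl (toLex (Sum.inr y)))) ≤
            toLex (Sum.inl (toLex (Sum.inl c))) := by
          rw [← hv]
          exact f.le_iff_le.2 (Sum.Lex.inl_le_inl_iff.2 (Sum.Lex.inr_le_inr_iff.2 hy))
        obtain ⟨w, hw⟩ : ∃ w, f (toLex (Sum.inl (toLex (Sum.inr y)))) = toLex w := ⟨_, rfl⟩
        rw [hw] at h1 ⊢
        rcases w with p' | d'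
        · rcases lex_sum_cases p' with ⟨c', rfl⟩ | ⟨x'', rfl⟩
          · exact ⟨c', rfl⟩
          · exact absurd (Sum.Lex.inl_le_inl_iff.1 h1) Sum.Lex.not_inr_le_inl
        · exact absurd h1 Sum.Lex.not_inr_le_inl
      choose g hg using key
      have hginj : Function.Injective g := by
        intro y₁ y₂ h
        have h2 : f (toLex (Sum.inl (toLex (Sum.inr y₁.1)))) =
            f (toLex (Sum.inl (toLex (Sum.inr y₂.1)))) := by rw [hg y₁, hg y₂, h]
        have h3 : y₁.1 = y₂.1 := by simpa using f.injective h2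
        exact Subtype.ext h3
      have hle : #{y : X // y ≤ x} ≤ #C := Cardinal.mk_le_of_injective hginj
      have hlt2 : #{y : X // y < x} ≤ #{y : X // y ≤ x} :=
        Cardinal.mk_le_of_injective
          (f := fun y : {y : X // y < x} => (⟨y.1, y.2.le⟩ : {y : X // y ≤ x}))
          (by intro a b h; have h2 := congrArg Subtype.val h; exact Subtype.ext h2)
      exact absurd (((hbelow x).trans_le hlt2).trans_le (hle.trans hC)) (lt_irrefl κ)
    · exact ⟨x', hv⟩
  · -- `f` sends `x` into the copy of `D`: impossible, too many elements above `x`.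
    exfalso
    have key : ∀ y : {y : X // x ≤ y}, ∃ d' : D,
        f (toLex (Sum.inl (toLex (Sum.inr y.1)))) = toLex (Sum.inr d') := by
      rintro ⟨y, hy⟩
      have h1 : toLex (Sum.inr d) ≤ f (toLex (Sum.inl (toLex (Sum.inr y)))) := by
        rw [← hv]
        exact f.le_iff_le.2 (Sum.Lex.inl_le_inl_iff.2 (Sum.Lex.inr_le_inr_iff.2 hy))
      obtain ⟨w, hw⟩ : ∃ w, f (toLex (Sum.inl (toLex (Sum.inr y)))) = toLex w := ⟨_, rfl⟩
      rw [hw] at h1 ⊢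
      rcases w with p' | d'
      · exact absurd h1 Sum.Lex.not_inr_le_inl
      · exact ⟨d', rfl⟩
    choose g hg using key
    have hginj : Function.Injective g := by
      intro y₁ y₂ h
      have h2 : f (toLex (Sum.inl (toLex (Sum.inr y₁.1)))) =
          f (toLex (Sum.inl (toLex (Sum.inr y₂.1)))) := by rw [hg y₁, hg y₂, h]
      have h3 : y₁.1 = y₂.1 := by simpa using f.injective h2
      exact Subtype.ext h3
    have hle : #{y : X // x ≤ y} ≤ #D := Cardinal.mk_le_of_injective hginj
    have hlt2 : #{y : X // x < y} ≤ #{y : X // x ≤ y} :=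
      Cardinal.mk_le_of_injective
        (f := fun y : {y : X // x < y} => (⟨y.1, y.2.le⟩ : {y : X // x ≤ y}))
        (by intro a b h; have h2 := congrArg Subtype.val h; exact Subtype.ext h2)
    exact absurd (((habove x).trans_le hlt2).trans_le (hle.trans hD)) (lt_irrefl κ)

lemma stepA [Nonempty X]
    (f : ((A ⊕ₗ X) ⊕ₗ B) ≃o ((C ⊕ₗ X) ⊕ₗ D))
    (h1 : ∀ x : X, ∃ x',
      f (toLex (Sum.inl (toLex (Sum.inr x)))) = toLex (Sum.inl (toLex (Sum.inr x'))))
    (h2 : ∀ x : X, ∃ x',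
      f.symm (toLex (Sum.inl (toLex (Sum.inr x)))) = toLex (Sum.inl (toLex (Sum.inr x'))))
    (a : A) :
    ∃ c, f (toLex (Sum.inl (toLex (Sum.inl a)))) = toLex (Sum.inl (toLex (Sum.inl c))) := by
  obtain ⟨v, hv⟩ : ∃ v, f (toLex (Sum.inl (toLex (Sum.inl a)))) = toLex v := ⟨_, rfl⟩
  rcases v with p | d
  · rcases lex_sum_cases p with ⟨c, rfl⟩ | ⟨x', rfl⟩
    · exact ⟨c, hv⟩
    · exfalso
      obtain ⟨x₀, hx₀⟩ := h2 x'
      have h3 : (toLex (Sum.inl (toLex (Sum.inl a))) : (A ⊕ₗ X) ⊕ₗ B)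
          = toLex (Sum.inl (toLex (Sum.inr x₀))) := by
        rw [← hx₀, ← hv]
        exact (f.symm_apply_apply _).symm
      simpa using h3
  · exfalso
    obtain ⟨x₀⟩ := ‹Nonempty X›
    obtain ⟨x₁, hx₁⟩ := h1 x₀
    have hlt : f (toLex (Sum.inl (toLex (Sum.inl a)))) <
        f (toLex (Sum.inl (toLex (Sum.inr x₀)))) :=
      f.lt_iff_lt.2 (Sum.Lex.inl_lt_inl_iff.2 (Sum.Lex.inl_lt_inr _ _))
    rw [hv, hx₁] at hlt
    exact Sum.Lex.not_inr_lt_inl hlt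

lemma stepB [Nonempty X]
    (f : ((A ⊕ₗ X) ⊕ₗ B) ≃o ((C ⊕ₗ X) ⊕ₗ D))
    (h1 : ∀ x : X, ∃ x',
      f (toLex (Sum.inl (toLex (Sum.inr x)))) = toLex (Sum.inl (toLex (Sum.inr x'))))
    (h2 : ∀ x : X, ∃ x',
      f.symm (toLex (Sum.inl (toLex (Sum.inr x)))) = toLex (Sum.inl (toLex (Sum.inr x'))))
    (b : B) :
    ∃ d, f (toLex (Sum.inr b)) = toLex (Sum.inr d) := by
  obtain ⟨v, hv⟩ : ∃ v, f (toLex (Sum.inr b)) = toLex v := ⟨_, rfl⟩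
  rcases v with p | d
  · exfalso
    rcases lex_sum_cases p with ⟨c, rfl⟩ | ⟨x', rfl⟩
    · obtain ⟨x₀⟩ := ‹Nonempty X›
      obtain ⟨x₁, hx₁⟩ := h1 x₀
      have hlt : f (toLex (Sum.inl (toLex (Sum.inr x₀)))) < f (toLex (Sum.inr b)) :=
        f.lt_iff_lt.2 (Sum.Lex.inl_lt_inr _ _)
      rw [hv, hx₁] at hlt
      exact Sum.Lex.not_inr_lt_inl (Sum.Lex.inl_lt_inl_iff.1 hlt)
    · obtain ⟨x₀, hx₀⟩ := h2 x'
      have h3 : (toLex (Sum.inr b) : (A ⊕ₗ X) ⊕ₗ B)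
          = toLex (Sum.inl (toLex (Sum.inr x₀))) := by
        rw [← hx₀, ← hv]
        exact (f.symm_apply_apply _).symm
      simpa using h3
  · exact ⟨d, hv⟩

end Sums

end DistLemmaAux

/-- **The distinguishing lemma.** For every infinite cardinal `κ` there is a linear order `X`
of cardinality `2 ^ κ` such that (a) for all linear orders `A, B, C, D` of cardinality at most
`κ`, every order isomorphism `f : A + X + B ≃o C + X + D` (lexicographic sums) maps the copy
of `A` onto the copy of `C`, the copy of `X` onto the copy of `X`, and the copy of `B` onto
the copy of `D`; and (b) every nonempty proper initial segment `I` of `X` is order-isomorphic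
to a strictly larger initial segment `J` of `X`. -/
theorem distinguishing_lemma (κ : Cardinal.{u}) (hκ : Cardinal.aleph0 ≤ κ) :
    ∃ X : LinOrd.{u},
      Cardinal.mk ↥X = 2 ^ κ ∧
      (∀ (A B C D : Type u) [LinearOrder A] [LinearOrder B] [LinearOrder C] [LinearOrder D],
        Cardinal.mk A ≤ κ → Cardinal.mk B ≤ κ → Cardinal.mk C ≤ κ → Cardinal.mk D ≤ κ →
        ∀ f : ((A ⊕ₗ ↥X) ⊕ₗ B) ≃o ((C ⊕ₗ ↥X) ⊕ₗ D),
          (⇑f '' Set.range (fun a : A => toLex (Sum.inl (toLex (Sum.inl a))))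
            = Set.range (fun c : C => toLex (Sum.inl (toLex (Sum.inl c))))) ∧
          (⇑f '' Set.range (fun x : ↥X => toLex (Sum.inl (toLex (Sum.inr x))))
            = Set.range (fun x : ↥X => toLex (Sum.inl (toLex (Sum.inr x))))) ∧
          (⇑f '' Set.range (fun b : B => toLex (Sum.inr b))
            = Set.range (fun d : D => toLex (Sum.inr d)))) ∧
      (∀ I : Set ↥X, IsLowerSet I → I.Nonempty → I ≠ Set.univ →
        ∃ J : Set ↥X, IsLowerSet J ∧ I ⊂ J ∧ Nonempty (↥J ≃o ↥I)) := by
  classical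
  set ι := κ.ord.ToType with hιdef
  have hι_card : #ι = κ := Cardinal.mk_ord_toType κ
  have hιne : Nonempty ι := by
    rw [hιdef, Ordinal.toType_nonempty_iff_ne_zero]
    intro h0
    have hκ0 : κ = 0 := by rw [← Cardinal.card_ord κ, h0, Ordinal.card_zero]
    exact Cardinal.aleph0_ne_zero (le_antisymm (hκ0 ▸ hκ) zero_le)
  have harrow : #(ι → ℤ) = 2 ^ κ := by
    rw [Cardinal.mk_arrow, Cardinal.mk_int, hι_card]
    simp only [Cardinal.lift_aleph0, Cardinal.lift_id, Cardinal.lift_uzero]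
    exact Cardinal.power_eq_two_power hκ (by simpa using (Cardinal.nat_lt_aleph0 2).le) hκ
  have hbelow : ∀ x : Lex (ι → ℤ), κ < #{y : Lex (ι → ℤ) // y < x} := fun x =>
    ((Cardinal.cantor κ).trans_le (harrow.symm.le.trans (DistLemmaAux.le_card_below x)))
  have habove : ∀ x : Lex (ι → ℤ), κ < #{y : Lex (ι → ℤ) // x < y} := fun x =>
    ((Cardinal.cantor κ).trans_le (harrow.symm.le.trans (DistLemmaAux.le_card_above x)))
  have hNX : Nonempty (Lex (ι → ℤ)) := ⟨toLex 0⟩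
  refine ⟨LinOrd.of (Lex (ι → ℤ)), ?_, ?_, ?_⟩
  · exact (Cardinal.mk_congr ofLex).trans harrow
  · intro A B C D _ _ _ _ hA hB hC hD f
    haveI : Nonempty ↥(LinOrd.of (Lex (ι → ℤ))) := hNX
    have h1 := DistLemmaAux.step1 hbelow habove hC hD f
    have h2 := DistLemmaAux.step1 hbelow habove hA hB f.symm
    have h1' : ∀ x : Lex (ι → ℤ), ∃ x',
        f.symm.symm (toLex (Sum.inl (toLex (Sum.inr x)))) =
          toLex (Sum.inl (toLex (Sum.inr x'))) := by
      simp only [OrderIso.symm_symm]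
      exact h1
    have hA2 := DistLemmaAux.stepA f h1 h2
    have hC2 := DistLemmaAux.stepA f.symm h2 h1'
    have hB2 := DistLemmaAux.stepB f h1 h2
    have hD2 := DistLemmaAux.stepB f.symm h2 h1'
    refine ⟨?_, ?_, ?_⟩
    · ext w
      constructor
      · rintro ⟨-, ⟨a, rfl⟩, rfl⟩
        obtain ⟨c, hc⟩ := hA2 a
        exact ⟨c, hc.symm⟩
      · rintro ⟨c, rfl⟩
        obtain ⟨a, ha⟩ := hC2 c
        exact ⟨_, ⟨a, rfl⟩, (congrArg f ha).symm.trans (f.apply_symm_apply _)⟩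
    · ext w
      constructor
      · rintro ⟨-, ⟨x, rfl⟩, rfl⟩
        obtain ⟨x', hx'⟩ := h1 x
        exact ⟨x', hx'.symm⟩
      · rintro ⟨x, rfl⟩
        obtain ⟨x₀, hx₀⟩ := h2 x
        exact ⟨_, ⟨x₀, rfl⟩, (congrArg f hx₀).symm.trans (f.apply_symm_apply _)⟩
    · ext w
      constructor
      · rintro ⟨-, ⟨b, rfl⟩, rfl⟩
        obtain ⟨d, hd⟩ := hB2 b
        exact ⟨d, hd.symm⟩
      · rintro ⟨d, rfl⟩
        obtain ⟨b, hb⟩ := hD2 d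
        exact ⟨_, ⟨b, rfl⟩, (congrArg f hb).symm.trans (f.apply_symm_apply _)⟩
  · intro I hI hne hproper
    obtain ⟨u, hu⟩ := hne
    obtain ⟨w, hw⟩ : ∃ w, w ∉ I := by
      by_contra h
      push_neg at h
      exact hproper (Set.eq_univ_of_forall h)
    obtain ⟨φ, hφu⟩ := DistLemmaAux.exists_iso_map (u : Lex (ι → ℤ)) w
    have hJls : IsLowerSet (φ '' I) := by
      rintro a b hba ⟨t, ht, rfl⟩
      refine ⟨φ.symm b, hI ?_ ht, φ.apply_symm_apply b⟩
      exact φ.le_iff_le.1 (by rw [φ.apply_symm_apply]; exact hba)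
    have hIJ : I ⊆ φ '' I := by
      rcases hI.total hJls with h | h
      · exact h
      · exact absurd (h ⟨u, hu, hφu⟩) hw
    refine ⟨φ '' I, hJls, ?_, ⟨(DistLemmaAux.imgIso φ I).symm⟩⟩
    rw [Set.ssubset_def]
    exact ⟨hIJ, fun hc => hw (hc ⟨u, hu, hφu⟩)⟩
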